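/- For a permutation w in S_n and indices 1 ≤ i < j ≤ n, the transposition T_{i,j} is below w in Bruhat order if and only if max{w(1),...,w(i)} ≥ j and max{w⁻¹(1),...,w⁻¹(i)} ≥ j. -/

import Mathlib

open Equiv

/-- Number of inversions (Coxeter length) of a permutation of ℕ. -/
noncomputable def invNum (w : Perm ℕ) : ℕ :=
  Set.ncard {p : ℕ × ℕ | p.1 < p.2 ∧ w p.2 < w p.1}

/-- Strong Bruhat order on (finitary) permutations of ℕ. -/
def BruhatLE (x y : Perm ℕ) : Prop :=
  Relation.ReflTransGen
    (fun u v => (∃ a b : ℕ, a < b ∧ v = u * Equiv.swap a b) ∧ invNum u < invNum v) x y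

def BruhatLT (x y : Perm ℕ) : Prop := BruhatLE x y ∧ x ≠ y

/-- w avoids the pattern 3412. -/
def Avoids3412 (w : Perm ℕ) : Prop :=
  ¬ ∃ a b c d : ℕ, a < b ∧ b < c ∧ c < d ∧ w c < w d ∧ w d < w a ∧ w a < w b

/-- w avoids the pattern 4231. -/
def Avoids4231 (w : Perm ℕ) : Prop :=
  ¬ ∃ a b c d : ℕ, a < b ∧ b < c ∧ c < d ∧ w d < w b ∧ w b < w c ∧ w c < w a

def InvSet (w : Perm ℕ) : Set (ℕ × ℕ) := {p : ℕ × ℕ | p.1 < p.2 ∧ w p.2 < w p.1}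

lemma invNum_eq (w : Perm ℕ) : invNum w = (InvSet w).ncard := rfl

lemma invSet_mul_swap_subset (u : Perm ℕ) (a b : ℕ) (hab : a < b) :
    InvSet (u * Equiv.swap a b) ⊆
      ((fun p : ℕ × ℕ => (min (Equiv.swap a b p.1) (Equiv.swap a b p.2),
          max (Equiv.swap a b p.1) (Equiv.swap a b p.2))) '' InvSet u)
      ∪ Set.Iic b ×ˢ Set.Iic b := by
  rintro ⟨p, q⟩ ⟨hpq, hv⟩
  simp only [Set.mem_setOf_eq, Perm.mul_apply] at hpq hv
  by_cases hb : q ≤ b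
  · exact Or.inr ⟨le_trans (le_of_lt hpq) hb, hb⟩
  · push_neg at hb
    left
    have hqa : Equiv.swap a b q = q :=
      Equiv.swap_apply_of_ne_of_ne (by omega) (by omega)
    have htp : Equiv.swap a b p < q := by
      rcases eq_or_ne p a with rfl | hpa
      · rw [Equiv.swap_apply_left]; omega
      · rcases eq_or_ne p b with rfl | hpb
        · rw [Equiv.swap_apply_right]; omega
        · rw [Equiv.swap_apply_of_ne_of_ne hpa hpb]; omega
    refine ⟨(Equiv.swap a b p, q), ⟨htp, ?_⟩, ?_⟩
    · rw [hqa] at hv; exact hv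
    · simp only [Equiv.swap_apply_self, hqa]
      simp [min_eq_left (le_of_lt hpq), max_eq_right (le_of_lt hpq)]

lemma invSet_finite_mul_swap (u : Perm ℕ) (a b : ℕ) (hab : a < b)
    (h : (InvSet u).Finite) : (InvSet (u * Equiv.swap a b)).Finite :=
  Set.Finite.subset ((h.image _).union ((Set.finite_Iic b).prod (Set.finite_Iic b)))
    (invSet_mul_swap_subset u a b hab)

lemma invSet_finite_of_mul_swap (u : Perm ℕ) (a b : ℕ) (hab : a < b)
    (h : (InvSet (u * Equiv.swap a b)).Finite) : (InvSet u).Finite := by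
  have := invSet_finite_mul_swap (u * Equiv.swap a b) a b hab h
  rwa [mul_assoc, Equiv.swap_mul_self, mul_one] at this

lemma invNum_lt_mul_swap (u : Perm ℕ) (a b : ℕ) (hab : a < b) (hu : u a < u b)
    (hfv : (InvSet (u * Equiv.swap a b)).Finite) :
    invNum u < invNum (u * Equiv.swap a b) := by
  have hfu : (InvSet u).Finite := invSet_finite_of_mul_swap u a b hab hfv
  set t := Equiv.swap a b with ht
  set v := u * t with hv
  have hvapp : ∀ x, v x = u (t x) := fun x => rfl
  set g : ℕ × ℕ → ℕ × ℕ := fun p =>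
    if (p.1 = a ∧ p.2 < b) ∨ (p.2 = b ∧ a < p.1) then p
    else (min (t p.1) (t p.2), max (t p.1) (t p.2)) with hg
  have hnotmem : (a, b) ∉ InvSet u := by
    intro h
    exact absurd h.2 (by simp only []; omega)
  have hmaps : ∀ p ∈ insert (a, b) (InvSet u), g p ∈ InvSet v := by
    rintro ⟨p, q⟩ hp
    rcases Set.mem_insert_iff.mp hp with heq | hmem
    · rw [heq]
      have : g (a, b) = (a, b) := by
        simp only [hg]
        rw [if_neg (by omega)]
        simp [Equiv.swap_apply_left, Equiv.swap_apply_right, min_eq_left (le_of_lt hab),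
          max_eq_right (le_of_lt hab), ht]
        omega
      rw [this]
      refine ⟨hab, ?_⟩
      simp only [hvapp, ht, Equiv.swap_apply_left, Equiv.swap_apply_right]
      exact hu
    · obtain ⟨hpq, hinv⟩ := hmem
      simp only at hpq hinv
      by_cases hc : (p = a ∧ q < b) ∨ (q = b ∧ a < p)
      · have hgp : g (p, q) = (p, q) := by simp only [hg]; rw [if_pos hc]
        rw [hgp]
        rcases hc with ⟨rfl, hqb⟩ | ⟨rfl, hap⟩
        · refine ⟨hpq, ?_⟩
          have h1 : t q = q := Equiv.swap_apply_of_ne_of_ne (by omega) (by omega)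
          simp only [hvapp, h1]
          simp only [ht, Equiv.swap_apply_left]
          omega
        · refine ⟨hpq, ?_⟩
          have h1 : t p = p := Equiv.swap_apply_of_ne_of_ne (by omega) (by omega)
          simp only [hvapp, h1]
          simp only [ht, Equiv.swap_apply_right]
          omega
      · push_neg at hc
        have htlt : t p < t q := by
          rcases eq_or_ne p a with rfl | hpa
          · have hbq : b ≤ q := hc.1 rfl
            have hqb : q ≠ b := by
              intro h; subst h; omega
            have : t q = q := Equiv.swap_apply_of_ne_of_ne (by omega) hqb
            rw [this, ht, Equiv.swap_apply_left]; omega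
          · rcases eq_or_ne q b with rfl | hqb
            · have hpa' : p ≤ a := by
                by_contra h
                exact hpa (by omega) <;> omega
              have hplt : p < a := lt_of_le_of_ne hpa' hpa
              have : t p = p := Equiv.swap_apply_of_ne_of_ne hpa (by omega)
              rw [this, ht, Equiv.swap_apply_right]; omega
            · rcases eq_or_ne p b with rfl | hpb
              · have : t q = q := Equiv.swap_apply_of_ne_of_ne (by omega) hqb
                rw [this, ht, Equiv.swap_apply_right]; omega
              · rcases eq_or_ne q a with rfl | hqa
                · have : t p = p := Equiv.swap_apply_of_ne_of_ne (by omega) (by omega)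
                  rw [this, ht, Equiv.swap_apply_left]; omega
                · have h1 : t p = p := Equiv.swap_apply_of_ne_of_ne hpa hpb
                  have h2 : t q = q := Equiv.swap_apply_of_ne_of_ne hqa hqb
                  rw [h1, h2]; exact hpq
        have hgp : g (p, q) = (t p, t q) := by
          simp only [hg]
          rw [if_neg (by push_neg; exact hc)]
          simp [min_eq_left (le_of_lt htlt), max_eq_right (le_of_lt htlt)]
        rw [hgp]
        refine ⟨htlt, ?_⟩
        simp only [hvapp, ht, Equiv.swap_apply_self]
        exact hinv
  have hins : ∀ x ∈ insert (a, b) (InvSet u), x.1 < x.2 := by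
    rintro ⟨p, q⟩ hp
    rcases Set.mem_insert_iff.mp hp with heq | hmem
    · have : p = a ∧ q = b := by
        constructor
        · exact congrArg Prod.fst heq
        · exact congrArg Prod.snd heq
      omega
    · exact hmem.1
  have hback : ∀ x y : ℕ, t x = y → x = Equiv.swap a b y := by
    intro x y h
    rw [← h, ht]
    exact (Equiv.swap_apply_self a b x).symm
  have key : ∀ x ∈ insert (a, b) (InvSet u), ∀ y ∈ insert (a, b) (InvSet u),
      ((x.1 = a ∧ x.2 < b) ∨ (x.2 = b ∧ a < x.1)) →
      ¬((y.1 = a ∧ y.2 < b) ∨ (y.2 = b ∧ a < y.1)) → g x ≠ g y := by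
    rintro ⟨p, q⟩ hx ⟨r, s⟩ hy cx cy hxy
    have hx12 : p < q := hins _ hx
    have hy12 : r < s := hins _ hy
    have hgx : g (p, q) = (p, q) := by simp only [hg]; rw [if_pos cx]
    have hgy : g (r, s) = (min (t r) (t s), max (t r) (t s)) := by
      simp only [hg]; rw [if_neg cy]
    rw [hgx, hgy] at hxy
    have h1 : min (t r) (t s) = p := (congrArg Prod.fst hxy).symm
    have h2 : max (t r) (t s) = q := (congrArg Prod.snd hxy).symm
    push_neg at cy
    simp only at cx cy
    have hcase : (t r = p ∧ t s = q) ∨ (t r = q ∧ t s = p) := by omega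
    rcases cx with ⟨hpa, hqb⟩ | ⟨hqb, hap⟩
    · -- p = a, a < q < b
      have haq : a < q := by omega
      rcases hcase with ⟨e1, e2⟩ | ⟨e1, e2⟩
      · have hr : r = Equiv.swap a b p := hback r p e1
        have hs : s = Equiv.swap a b q := hback s q e2
        rw [hpa, Equiv.swap_apply_left] at hr
        rw [Equiv.swap_apply_of_ne_of_ne (show q ≠ a by omega) (show q ≠ b by omega)] at hs
        omega
      · have hr : r = Equiv.swap a b q := hback r q e1
        have hs : s = Equiv.swap a b p := hback s p e2
        rw [Equiv.swap_apply_of_ne_of_ne (show q ≠ a by omega) (show q ≠ b by omega)] at hr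
        rw [hpa, Equiv.swap_apply_left] at hs
        have := cy.2 hs
        omega
    · -- q = b, a < p < b
      have hpb : p < b := by omega
      rcases hcase with ⟨e1, e2⟩ | ⟨e1, e2⟩
      · have hr : r = Equiv.swap a b p := hback r p e1
        have hs : s = Equiv.swap a b q := hback s q e2
        rw [Equiv.swap_apply_of_ne_of_ne (show p ≠ a by omega) (show p ≠ b by omega)] at hr
        rw [hqb, Equiv.swap_apply_right] at hs
        omega
      · have hr : r = Equiv.swap a b q := hback r q e1
        have hs : s = Equiv.swap a b p := hback s p e2
        rw [hqb, Equiv.swap_apply_right] at hr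
        rw [Equiv.swap_apply_of_ne_of_ne (show p ≠ a by omega) (show p ≠ b by omega)] at hs
        have := cy.1 hr
        omega
  have hinj : Set.InjOn g (insert (a, b) (InvSet u)) := by
    rintro ⟨p, q⟩ hx ⟨r, s⟩ hy hxy
    have hx12 : p < q := hins _ hx
    have hy12 : r < s := hins _ hy
    by_cases cx : (p = a ∧ q < b) ∨ (q = b ∧ a < p) <;>
      by_cases cy : (r = a ∧ s < b) ∨ (s = b ∧ a < r)
    · have hgx : g (p, q) = (p, q) := by simp only [hg]; rw [if_pos cx]
      have hgy : g (r, s) = (r, s) := by simp only [hg]; rw [if_pos cy]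
      rw [hgx, hgy] at hxy
      exact hxy
    · exact absurd hxy (key _ hx _ hy cx cy)
    · exact absurd hxy.symm (key _ hy _ hx cy cx)
    · have hgx : g (p, q) = (min (t p) (t q), max (t p) (t q)) := by
        simp only [hg]; rw [if_neg cx]
      have hgy : g (r, s) = (min (t r) (t s), max (t r) (t s)) := by
        simp only [hg]; rw [if_neg cy]
      rw [hgx, hgy] at hxy
      have h1 : min (t p) (t q) = min (t r) (t s) := congrArg Prod.fst hxy
      have h2 : max (t p) (t q) = max (t r) (t s) := congrArg Prod.snd hxy
      have hcase : (t p = t r ∧ t q = t s) ∨ (t p = t s ∧ t q = t r) := by omega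
      rcases hcase with ⟨e1, e2⟩ | ⟨e1, e2⟩
      · have e1' : p = r := t.injective e1
        have e2' : q = s := t.injective e2
        rw [e1', e2']
      · have e1' : p = s := t.injective e1
        have e2' : q = r := t.injective e2
        omega
  have hcard : (insert (a, b) (InvSet u)).ncard ≤ (InvSet v).ncard :=
    Set.ncard_le_ncard_of_injOn g hmaps hinj hfv
  rw [invNum_eq, invNum_eq]
  rw [Set.ncard_insert_of_notMem hnotmem hfu] at hcard
  omega

lemma apply_lt_of_invNum_lt (u : Perm ℕ) (a b : ℕ) (hab : a < b)
    (h : invNum u < invNum (u * Equiv.swap a b)) : u a < u b := by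
  have hfv : (InvSet (u * Equiv.swap a b)).Finite := by
    by_contra hinf
    have h0 : invNum (u * Equiv.swap a b) = 0 := Set.Infinite.ncard hinf
    omega
  rcases lt_trichotomy (u a) (u b) with h1 | h1 | h1
  · exact h1
  · exact absurd (u.injective h1) (by omega)
  · exfalso
    have hfu : (InvSet u).Finite := invSet_finite_of_mul_swap u a b hab hfv
    have := invNum_lt_mul_swap (u * Equiv.swap a b) a b hab
      (by
        simp only [Perm.mul_apply, Equiv.swap_apply_left, Equiv.swap_apply_right]
        exact h1)
      (by rwa [mul_assoc, Equiv.swap_mul_self, mul_one])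
    rw [mul_assoc, Equiv.swap_mul_self, mul_one] at this
    omega

/-- The covering-type generating relation of `BruhatLE`. -/
lemma step_mono1 (u v : Perm ℕ) (i j : ℕ)
    (h : (∃ a b : ℕ, a < b ∧ v = u * Equiv.swap a b) ∧ invNum u < invNum v)
    (hc : ∃ k, k ≤ i ∧ j ≤ u k) : ∃ k, k ≤ i ∧ j ≤ v k := by
  obtain ⟨⟨a, b, hab, rfl⟩, hlt⟩ := h
  have hub : u a < u b := apply_lt_of_invNum_lt u a b hab hlt
  obtain ⟨k, hk, hjk⟩ := hc
  rcases eq_or_ne k a with rfl | hka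
  · exact ⟨k, hk, by
      simp only [Perm.mul_apply, Equiv.swap_apply_left]; omega⟩
  · rcases eq_or_ne k b with rfl | hkb
    · exact ⟨a, by omega, by
        simp only [Perm.mul_apply, Equiv.swap_apply_left]; omega⟩
    · exact ⟨k, hk, by
        simp only [Perm.mul_apply, Equiv.swap_apply_of_ne_of_ne hka hkb]; omega⟩

lemma step_mono2 (u v : Perm ℕ) (i j : ℕ)
    (h : (∃ a b : ℕ, a < b ∧ v = u * Equiv.swap a b) ∧ invNum u < invNum v)
    (hc : ∃ m, j ≤ m ∧ u m ≤ i) : ∃ m, j ≤ m ∧ v m ≤ i := by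
  obtain ⟨⟨a, b, hab, rfl⟩, hlt⟩ := h
  have hub : u a < u b := apply_lt_of_invNum_lt u a b hab hlt
  obtain ⟨m, hm, him⟩ := hc
  rcases eq_or_ne m a with rfl | hma
  · exact ⟨b, by omega, by
      simp only [Perm.mul_apply, Equiv.swap_apply_right]; omega⟩
  · rcases eq_or_ne m b with rfl | hmb
    · exact ⟨m, hm, by
        simp only [Perm.mul_apply, Equiv.swap_apply_right]; omega⟩
    · exact ⟨m, hm, by
        simp only [Perm.mul_apply, Equiv.swap_apply_of_ne_of_ne hma hmb]; omega⟩

lemma cond2_iff (w : Perm ℕ) (i j : ℕ) :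
    (∃ k, k ≤ i ∧ j ≤ w⁻¹ k) ↔ (∃ m, j ≤ m ∧ w m ≤ i) := by
  constructor
  · rintro ⟨k, h1, h2⟩
    exact ⟨w⁻¹ k, h2, by rw [Perm.coe_inv, apply_symm_apply]; exact h1⟩
  · rintro ⟨m, h1, h2⟩
    exact ⟨w m, h2, by rw [Perm.coe_inv, symm_apply_apply]; exact h1⟩

lemma invSet_finite_of_fix (w : Perm ℕ) (n : ℕ) (hw : ∀ k, n ≤ k → w k = k) :
    (InvSet w).Finite := by
  have hlt : ∀ k, k < n → w k < n := by
    intro k hk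
    by_contra h
    push_neg at h
    have := hw (w k) h
    have := w.injective this
    omega
  apply Set.Finite.subset ((Set.finite_Iio n).prod (Set.finite_Iio n))
  rintro ⟨p, q⟩ ⟨hpq, hv⟩
  simp only at hpq hv
  have hq : q < n := by
    by_contra h
    push_neg at h
    have hq' := hw q h
    rcases lt_or_ge p n with hp | hp
    · have := hlt p hp; omega
    · have := hw p hp; omega
  exact ⟨by simp; omega, by simpa using hq⟩

lemma exists_pos_val_lt (w : Perm ℕ) (V : ℕ) (E : Finset ℕ) (hE : E.card < V) :
    ∃ d, w d < V ∧ d ∉ E := by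
  classical
  set D : Finset ℕ := (Finset.range V).image (fun v => w⁻¹ v) with hD
  have hcard : D.card = V := by
    rw [hD, Finset.card_image_of_injective _ (Equiv.injective _), Finset.card_range]
  have hne : (D \ E).Nonempty := by
    rw [← Finset.card_pos]
    have h1 : D.card ≤ (D \ E).card + E.card := Finset.card_le_card_sdiff_add_card
    omega
  obtain ⟨d, hd⟩ := hne
  rw [Finset.mem_sdiff] at hd
  obtain ⟨hd1, hd2⟩ := hd
  rw [hD, Finset.mem_image] at hd1
  obtain ⟨v, hv, rfl⟩ := hd1
  rw [Finset.mem_range] at hv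
  exact ⟨w⁻¹ v, by rw [Perm.coe_inv, apply_symm_apply]; exact hv, hd2⟩

lemma exists_lt_val_gt (w : Perm ℕ) (j i : ℕ) (h1 : w j < i) (h2 : i < j) :
    ∃ c, c < j ∧ c ≠ i ∧ w j < w c := by
  classical
  set D : Finset ℕ := (Finset.range (w j + 1)).image (fun v => w⁻¹ v) with hD
  have hcardD : D.card = w j + 1 := by
    rw [hD, Finset.card_image_of_injective _ (Equiv.injective _), Finset.card_range]
  have hjD : j ∈ D := by
    rw [hD, Finset.mem_image]
    exact ⟨w j, by rw [Finset.mem_range]; omega, by rw [Perm.coe_inv, symm_apply_apply]⟩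
  set E : Finset ℕ := insert i (D.erase j) with hE
  have hcardE : E.card ≤ w j + 1 := by
    calc E.card ≤ (D.erase j).card + 1 := Finset.card_insert_le _ _
    _ = (D.card - 1) + 1 := by rw [Finset.card_erase_of_mem hjD]
    _ = w j + 1 := by omega
  have hne : (Finset.range j \ E).Nonempty := by
    rw [← Finset.card_pos]
    have hb : (Finset.range j).card ≤ (Finset.range j \ E).card + E.card :=
      Finset.card_le_card_sdiff_add_card
    rw [Finset.card_range] at hb
    omega
  obtain ⟨c, hc⟩ := hne
  rw [Finset.mem_sdiff, Finset.mem_range] at hc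
  obtain ⟨hc1, hc2⟩ := hc
  rw [hE, Finset.mem_insert] at hc2
  push_neg at hc2
  refine ⟨c, hc1, hc2.1, ?_⟩
  by_contra h
  push_neg at h
  apply hc2.2
  rw [Finset.mem_erase]
  refine ⟨by omega, ?_⟩
  rw [hD, Finset.mem_image]
  exact ⟨w c, by rw [Finset.mem_range]; omega, by rw [Perm.coe_inv, symm_apply_apply]⟩

lemma bruhat_of_cond (i j : ℕ) (hij : i < j) :
    ∀ (N : ℕ) (w : Perm ℕ), invNum w ≤ N → (InvSet w).Finite →
      (∃ k, k ≤ i ∧ j ≤ w k) → (∃ m, j ≤ m ∧ w m ≤ i) →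
      BruhatLE (Equiv.swap i j) w := by
  intro N
  induction N with
  | zero =>
    rintro w hN hfin ⟨a0, ha0i, hja0⟩ ⟨b0, hjb0, hb0⟩
    exfalso
    have hmem : (a0, b0) ∈ InvSet w :=
      ⟨show a0 < b0 by omega, show w b0 < w a0 by omega⟩
    have hpos := (Set.ncard_pos hfin).mpr ⟨(a0, b0), hmem⟩
    rw [← invNum_eq] at hpos
    omega
  | succ N IH =>
    rintro w hN hfin ⟨a0, ha0i, hja0⟩ ⟨b0, hjb0, hb0⟩
    by_cases hw : w = Equiv.swap i j
    · rw [hw]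
      exact Relation.ReflTransGen.refl
    have finish : ∀ c d : ℕ, c < d → w d < w c →
        (∃ k, k ≤ i ∧ j ≤ (w * Equiv.swap c d) k) →
        (∃ m, j ≤ m ∧ (w * Equiv.swap c d) m ≤ i) →
        BruhatLE (Equiv.swap i j) w := by
      intro c d hcd hdc h1 h2
      have hweq : w = (w * Equiv.swap c d) * Equiv.swap c d := by
        rw [mul_assoc, Equiv.swap_mul_self, mul_one]
      have hufin : (InvSet (w * Equiv.swap c d)).Finite :=
        invSet_finite_mul_swap w c d hcd hfin
      have hval : (w * Equiv.swap c d) c < (w * Equiv.swap c d) d := by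
        simp only [Perm.mul_apply, Equiv.swap_apply_left, Equiv.swap_apply_right]
        exact hdc
      have hlt' := invNum_lt_mul_swap (w * Equiv.swap c d) c d hcd hval
        (by rw [← hweq]; exact hfin)
      rw [← hweq] at hlt'
      have hle := IH (w * Equiv.swap c d) (by omega) hufin h1 h2
      exact Relation.ReflTransGen.tail hle ⟨⟨c, d, hcd, hweq⟩, hlt'⟩
    have hwa : w (w⁻¹ j) = j := w.apply_symm_apply j
    have hwb : w (w⁻¹ i) = i := w.apply_symm_apply i
    rcases le_or_gt (w⁻¹ j) i with haw | haw
    · rcases le_or_gt j (w⁻¹ i) with hbw | hbw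
      · rcases eq_or_ne (w⁻¹ j) i with hai | hai
        · -- a = i : w i = j
          have hwi : w i = j := by rw [← hai, hwa]
          rcases eq_or_ne (w⁻¹ i) j with hbj | hbj
          · -- b = j : w j = i ; the support case S5
            have hwj : w j = i := by rw [← hbj, hwb]
            set z := w * Equiv.swap i j with hz
            have hzne : z ≠ 1 := by
              intro h
              apply hw
              have h2 : z * Equiv.swap i j = 1 * Equiv.swap i j := by rw [h]
              rwa [hz, mul_assoc, Equiv.swap_mul_self, mul_one, one_mul] at h2
            have hex : ∃ x, z x ≠ x := by
              by_contra h
              push_neg at h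
              exact hzne (Equiv.ext h)
            set c := Nat.find hex with hcdef
            have hcspec : z c ≠ c := Nat.find_spec hex
            have hcmin : ∀ m, m < c → z m = m := fun m hm => not_not.mp (Nat.find_min hex hm)
            have hzi : z i = i := by
              rw [hz, Perm.mul_apply, Equiv.swap_apply_left, hwj]
            have hzj : z j = j := by
              rw [hz, Perm.mul_apply, Equiv.swap_apply_right, hwi]
            have hci : c ≠ i := by
              intro h; rw [h, hzi] at hcspec; exact hcspec rfl
            have hcj : c ≠ j := by
              intro h; rw [h, hzj] at hcspec; exact hcspec rfl
            have hclt : c < z c := by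
              rcases lt_trichotomy c (z c) with h | h | h
              · exact h
              · exact absurd h.symm hcspec
              · exact absurd (z.injective (hcmin (z c) h)) hcspec
            have hzd : z (z⁻¹ c) = c := z.apply_symm_apply c
            have hdgt : c < z⁻¹ c := by
              rcases lt_trichotomy c (z⁻¹ c) with h | h | h
              · exact h
              · exfalso; rw [← h] at hzd; exact hcspec hzd
              · exfalso
                have h2 := hcmin (z⁻¹ c) h
                rw [h2] at hzd
                omega
            have hdi : z⁻¹ c ≠ i := by
              intro h; rw [h, hzi] at hzd; exact hci hzd.symm
            have hdj : z⁻¹ c ≠ j := by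
              intro h; rw [h, hzj] at hzd; exact hcj hzd.symm
            have hzw : ∀ x, x ≠ i → x ≠ j → z x = w x := by
              intro x h1 h2
              rw [hz, Perm.mul_apply, Equiv.swap_apply_of_ne_of_ne h1 h2]
            have hwc : w c = z c := (hzw c hci hcj).symm
            have hwd : w (z⁻¹ c) = c := by
              rw [← hzw _ hdi hdj, hzd]
            refine finish c (z⁻¹ c) hdgt (by rw [hwd, hwc]; omega)
              ⟨i, le_rfl, ?_⟩ ⟨j, le_rfl, ?_⟩
            · rw [Perm.mul_apply, Equiv.swap_apply_of_ne_of_ne (Ne.symm hci) (Ne.symm hdi), hwi]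
            · rw [Perm.mul_apply, Equiv.swap_apply_of_ne_of_ne (Ne.symm hcj) (Ne.symm hdj), hwj]
          · -- b > j
            have hbgt : j < w⁻¹ i := by omega
            rcases lt_or_ge i (w j) with hwj | hwj
            · -- swap (j, w⁻¹ i)
              refine finish j (w⁻¹ i) hbgt (by rw [hwb]; omega)
                ⟨i, le_rfl, ?_⟩ ⟨j, le_rfl, ?_⟩
              · rw [Perm.mul_apply, Equiv.swap_apply_of_ne_of_ne (by omega) (by omega), hwi]
              · simp only [Perm.mul_apply, Equiv.swap_apply_left, hwb]
                omega
            · -- w j < i : pigeonhole for c < j, c ≠ i, w j < w c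
              have hwjne : w j ≠ i := by
                intro h
                have : j = w⁻¹ i := by rw [← h, Perm.coe_inv, symm_apply_apply]
                omega
              have hwji : w j < i := by omega
              obtain ⟨c, hc1, hc2, hc3⟩ := exists_lt_val_gt w j i hwji hij
              refine finish c j hc1 hc3 ⟨i, le_rfl, ?_⟩ ⟨w⁻¹ i, by omega, ?_⟩
              · rw [Perm.mul_apply, Equiv.swap_apply_of_ne_of_ne (Ne.symm hc2) (by omega), hwi]
              · rw [Perm.mul_apply, Equiv.swap_apply_of_ne_of_ne (by omega) (by omega), hwb]
        · -- a < i
          have halt : w⁻¹ j < i := by omega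
          rcases lt_or_ge (w i) j with hwi | hwi
          · -- swap (a, i)
            have h1 : w⁻¹ i ≠ w⁻¹ j := by
              intro h; have := congrArg w h; rw [hwa, hwb] at this; omega
            refine finish (w⁻¹ j) i halt (by rw [hwa]; omega)
              ⟨i, le_rfl, ?_⟩ ⟨w⁻¹ i, hbw, ?_⟩
            · simp only [Perm.mul_apply, Equiv.swap_apply_right, hwa]
              omega
            · rw [Perm.mul_apply, Equiv.swap_apply_of_ne_of_ne h1 (by omega), hwb]
          · -- w i > j : pigeonhole
            have hwine : w i ≠ j := by
              intro h
              have : i = w⁻¹ j := by rw [← h, Perm.coe_inv, symm_apply_apply]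
              omega
            obtain ⟨d, hd1, hd2⟩ := exists_pos_val_lt w j
              (insert (w⁻¹ i) (Finset.range (w⁻¹ j)))
              (by
                calc (insert (w⁻¹ i) (Finset.range (w⁻¹ j))).card
                    ≤ (Finset.range (w⁻¹ j)).card + 1 := Finset.card_insert_le _ _
                  _ = w⁻¹ j + 1 := by rw [Finset.card_range]
                  _ < j := by omega)
            rw [Finset.mem_insert, Finset.mem_range] at hd2
            push_neg at hd2
            have hda : w⁻¹ j ≠ d := by
              intro h; rw [← h, hwa] at hd1; omega
            have hdi : d ≠ i := by
              intro h; rw [h] at hd1; omega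
            have h1 : w⁻¹ i ≠ w⁻¹ j := by
              intro h; have := congrArg w h; rw [hwa, hwb] at this; omega
            refine finish (w⁻¹ j) d (by omega) (by rw [hwa]; omega)
              ⟨i, le_rfl, ?_⟩ ⟨w⁻¹ i, hbw, ?_⟩
            · rw [Perm.mul_apply, Equiv.swap_apply_of_ne_of_ne (by omega) (by omega)]
              omega
            · rw [Perm.mul_apply, Equiv.swap_apply_of_ne_of_ne h1 (Ne.symm hd2.1), hwb]
      · -- w⁻¹ i < j : use b0
        have hb0ne : w b0 ≠ i := by
          intro h
          have : b0 = w⁻¹ i := by rw [← h, Perm.coe_inv, symm_apply_apply]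
          omega
        have hane : w⁻¹ j ≠ w⁻¹ i := by
          intro h
          have := congrArg w h
          rw [hwa, hwb] at this
          omega
        refine finish (w⁻¹ i) b0 (by omega) (by rw [hwb]; omega)
          ⟨w⁻¹ j, haw, ?_⟩ ⟨b0, hjb0, ?_⟩
        · rw [Perm.mul_apply, Equiv.swap_apply_of_ne_of_ne hane (by omega), hwa]
        · simp only [Perm.mul_apply, Equiv.swap_apply_right, hwb]
          omega
    · -- w⁻¹ j > i : use a0
      have ha0ne : w a0 ≠ j := by
        intro h
        have : a0 = w⁻¹ j := by rw [← h, Perm.coe_inv, symm_apply_apply]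
        omega
      have hb0ne : b0 ≠ w⁻¹ j := by
        intro h
        rw [h, hwa] at hb0
        omega
      refine finish a0 (w⁻¹ j) (by omega) (by rw [hwa]; omega)
        ⟨a0, ha0i, ?_⟩ ⟨b0, hjb0, ?_⟩
      · simp only [Perm.mul_apply, Equiv.swap_apply_left, hwa]
        omega
      · rw [Perm.mul_apply, Equiv.swap_apply_of_ne_of_ne (by omega) hb0ne]
        exact hb0


/-- Criterion for a transposition to lie below w in Bruhat order:
T_{i,j} ≤ w iff μ_w(i) ≥ j and μ_{w⁻¹}(i) ≥ j (0-based indices, w ∈ S_n). -/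
theorem stmt0 (n : ℕ) (w : Perm ℕ) (hw : ∀ k, n ≤ k → w k = k)
    (i j : ℕ) (hij : i < j) (hjn : j < n) :
    BruhatLE (Equiv.swap i j) w ↔
      (∃ k, k ≤ i ∧ j ≤ w k) ∧ (∃ k, k ≤ i ∧ j ≤ w⁻¹ k) := by
  constructor
  · intro h
    clear hw hjn
    have key : (∃ k, k ≤ i ∧ j ≤ w k) ∧ (∃ m, j ≤ m ∧ w m ≤ i) := by
      induction h with
      | refl =>
        constructor
        · exact ⟨i, le_rfl, by rw [Equiv.swap_apply_left]⟩
        · exact ⟨j, by omega, by rw [Equiv.swap_apply_right]⟩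
      | tail h1 h2 ih =>
        exact ⟨step_mono1 _ _ i j h2 ih.1, step_mono2 _ _ i j h2 ih.2⟩
    exact ⟨key.1, (cond2_iff w i j).mpr key.2⟩
  · rintro ⟨hc1, hc2⟩
    exact bruhat_of_cond i j hij (invNum w) w le_rfl (invSet_finite_of_fix w n hw) hc1
      ((cond2_iff w i j).mp hc2)
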